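/- For the modified split-step backward Milstein (MSSBM) method applied to the same test system (F = λI₂, G₁ = diag(ε,−ε), G₂ = antidiag(σ,σ)), the zero solution is asymptotically mean-square stable if and only if (y²+z²+1)² + 2x(y²+z²−x+2) − (y²z²+1) < 0, with x = hλ, y² = hε², z² = hσ². -/

import Mathlib

set_option maxHeartbeats 2000000


open Kronecker Matrix

/-- For the modified split-step backward Milstein (MSSBM) method applied to the
test system `F = λI₂`, `G₁ = diag(ε,−ε)`, `G₂ = antidiag(σ,σ)`, the zero
solution of the discrete scheme is asymptotically mean-square stable
(`ρ(E[Rₙ⊗Rₙ]) < 1`) if and only if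
`(y²+z²+1)² + 2x(y²+z²−x+2) − (y²z²+1) < 0`, with `x = hλ`, `y² = hε²`,
`z² = hσ²`. Here `P = (I − hF + (h/2)(G₁²+G₂²))⁻¹` and the stability matrix
is given by the MSSM formula with `Q = I`. -/
theorem mssbm_ms_stability_iff (lam ε σ h : ℝ) (hh : 0 < h)
    (hinv : 1 - h * lam + (h / 2) * (ε ^ 2 + σ ^ 2) ≠ 0)
    (F G₁ G₂ P : Matrix (Fin 2) (Fin 2) ℝ)
    (hF : F = !![lam, 0; 0, lam]) (hG₁ : G₁ = !![ε, 0; 0, -ε])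
    (hG₂ : G₂ = !![(0:ℝ), σ; σ, 0])
    (hP : P = ((1 : Matrix (Fin 2) (Fin 2) ℝ) - h • F
        + (h / 2) • (G₁ * G₁ + G₂ * G₂))⁻¹)
    (S : Matrix (Fin 2 × Fin 2) (Fin 2 × Fin 2) ℝ)
    (hS : S = ((1 : Matrix (Fin 2 × Fin 2) (Fin 2 × Fin 2) ℝ)
        + h • (G₁ ⊗ₖ G₁ + G₂ ⊗ₖ G₂)
        + (h ^ 2 / 2) • ((G₁ * G₁) ⊗ₖ (G₁ * G₁) + (G₂ * G₂) ⊗ₖ (G₂ * G₂))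
        + (h ^ 2 / 4) • ((G₁ * G₂ + G₂ * G₁) ⊗ₖ (G₁ * G₂ + G₂ * G₁))
        + (h ^ 2 / 4) • ((G₁ * G₂ - G₂ * G₁) ⊗ₖ (G₁ * G₂ - G₂ * G₁))
        + (h / 2) • ((G₁ * G₁ + G₂ * G₂) ⊗ₖ (1 : Matrix (Fin 2) (Fin 2) ℝ)
            + (1 : Matrix (Fin 2) (Fin 2) ℝ) ⊗ₖ (G₁ * G₁ + G₂ * G₂))
        + (h ^ 2 / 4) • ((G₁ * G₁) ⊗ₖ (G₁ * G₁) + (G₂ * G₂) ⊗ₖ (G₂ * G₂)))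
        * (P ⊗ₖ P)) :
    (∀ μ ∈ spectrum ℂ (S.map (Complex.ofReal ·)), ‖μ‖ < 1) ↔
      (h * ε ^ 2 + h * σ ^ 2 + 1) ^ 2
        + 2 * (h * lam) * (h * ε ^ 2 + h * σ ^ 2 - h * lam + 2)
        - ((h * ε ^ 2) * (h * σ ^ 2) + 1) < 0 := by
  set d : ℝ := 1 - h * lam + (h / 2) * (ε ^ 2 + σ ^ 2) with hd
  -- P is a scalar matrix
  have hPval : P = d⁻¹ • 1 := by
    have hM : (1 : Matrix (Fin 2) (Fin 2) ℝ) - h • F + (h / 2) • (G₁ * G₁ + G₂ * G₂)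
        = d • 1 := by
      ext i j
      fin_cases i <;> fin_cases j <;>
        simp [hF, hG₁, hG₂, Matrix.mul_apply, Fin.sum_univ_two, Matrix.one_apply] <;> ring
    rw [hP, hM, Matrix.inv_eq_right_inv]
    rw [smul_mul_smul_comm, one_mul, mul_inv_cancel₀ hinv, one_smul]
  set q : ℝ := 3 / 4 * ((h * ε ^ 2) ^ 2 + (h * σ ^ 2) ^ 2) with hq
  set A : ℝ := d⁻¹ ^ 2 * (1 + 2 * (h * ε ^ 2) + (h * σ ^ 2) + q) with hA
  set B : ℝ := d⁻¹ ^ 2 * ((h * σ ^ 2) + (h * ε ^ 2) * (h * σ ^ 2)) with hB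
  set C : ℝ := d⁻¹ ^ 2 * (1 + (h * σ ^ 2) + q) with hC
  set D : ℝ := d⁻¹ ^ 2 * ((h * σ ^ 2) - (h * ε ^ 2) * (h * σ ^ 2)) with hD
  -- the reindexed characteristic matrix
  have hsub : ∀ μ : ℂ,
      ((algebraMap ℂ (Matrix (Fin 2 × Fin 2) (Fin 2 × Fin 2) ℂ)) μ
        - S.map (Complex.ofReal ·)).submatrix
        (finProdFinEquiv : Fin 2 × Fin 2 ≃ Fin 4).symm
        (finProdFinEquiv : Fin 2 × Fin 2 ≃ Fin 4).symm
      = !![μ - (A : ℝ), 0, 0, -((B : ℝ) : ℂ);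
          0, μ - (C : ℝ), -((D : ℝ) : ℂ), 0;
          0, -((D : ℝ) : ℂ), μ - (C : ℝ), 0;
          -((B : ℝ) : ℂ), 0, 0, μ - (A : ℝ)] := by
    intro μ
    have e0 : (finProdFinEquiv : Fin 2 × Fin 2 ≃ Fin 4).symm 0 = (0,0) := by decide
    have e1 : (finProdFinEquiv : Fin 2 × Fin 2 ≃ Fin 4).symm 1 = (0,1) := by decide
    have e2 : (finProdFinEquiv : Fin 2 × Fin 2 ≃ Fin 4).symm 2 = (1,0) := by decide
    have e3 : (finProdFinEquiv : Fin 2 × Fin 2 ≃ Fin 4).symm 3 = (1,1) := by decide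
    ext i j
    fin_cases i <;> fin_cases j <;>
      simp [e0, e1, e2, e3, hS, hPval, hG₁, hG₂, hA, hB, hC, hD, hq, Matrix.sub_apply,
        Matrix.add_apply, Matrix.smul_apply, Matrix.mul_apply, Fintype.sum_prod_type,
        Fin.sum_univ_two, Matrix.kroneckerMap_apply, Matrix.one_apply, Matrix.map_apply,
        Matrix.algebraMap_matrix_apply, smul_eq_mul, Prod.ext_iff] <;>
      push_cast <;> ring
  -- the characteristic polynomial factors
  have key : ∀ μ : ℂ, μ ∈ spectrum ℂ (S.map (Complex.ofReal ·)) ↔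
      (μ = ((A + B : ℝ) : ℂ) ∨ μ = ((A - B : ℝ) : ℂ)
        ∨ μ = ((C + D : ℝ) : ℂ) ∨ μ = ((C - D : ℝ) : ℂ)) := by
    intro μ
    rw [spectrum.mem_iff, Matrix.isUnit_iff_isUnit_det, isUnit_iff_ne_zero, not_ne_iff,
      ← Matrix.det_submatrix_equiv_self (finProdFinEquiv : Fin 2 × Fin 2 ≃ Fin 4).symm,
      hsub μ]
    have hdet : (!![μ - (A : ℝ), 0, 0, -((B : ℝ) : ℂ);
          0, μ - (C : ℝ), -((D : ℝ) : ℂ), 0;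
          0, -((D : ℝ) : ℂ), μ - (C : ℝ), 0;
          -((B : ℝ) : ℂ), 0, 0, μ - (A : ℝ)]).det
        = (μ - ((A + B : ℝ) : ℂ)) * (μ - ((A - B : ℝ) : ℂ))
          * ((μ - ((C + D : ℝ) : ℂ)) * (μ - ((C - D : ℝ) : ℂ))) := by
      simp [Matrix.det_succ_row_zero, Fin.sum_univ_succ, Fin.castSucc, Fin.castAdd,
        Fin.castLE, Fin.succAbove]
      push_cast
      ring
    rw [hdet]
    simp only [mul_eq_zero, sub_eq_zero]
    tauto
  have hy : (0:ℝ) ≤ h * ε ^ 2 := by positivity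
  have hz : (0:ℝ) ≤ h * σ ^ 2 := by positivity
  have hyz : (0:ℝ) ≤ (h * ε ^ 2) * (h * σ ^ 2) := mul_nonneg hy hz
  have hd2 : (0:ℝ) < d ^ 2 := lt_of_le_of_ne (sq_nonneg d) (Ne.symm (pow_ne_zero 2 hinv))
  have hdiv : ∀ N : ℝ, d⁻¹ ^ 2 * N = N / d ^ 2 := by
    intro N; rw [inv_pow]; ring
  constructor
  · intro H
    have h1 := H _ ((key ((A + B : ℝ) : ℂ)).2 (Or.inl rfl))
    rw [Complex.norm_real, Real.norm_eq_abs] at h1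
    have hr1 : A + B < 1 := lt_of_abs_lt h1
    have hAB : A + B = (1 + 2 * (h * ε ^ 2) + 2 * (h * σ ^ 2) + q
        + (h * ε ^ 2) * (h * σ ^ 2)) / d ^ 2 := by
      rw [hA, hB, ← hdiv]; ring
    rw [hAB, div_lt_one hd2] at hr1
    rw [hq, hd] at hr1
    nlinarith [hr1]
  · intro hcond μ hmu
    have hN1 : 1 + 2 * (h * ε ^ 2) + 2 * (h * σ ^ 2) + q + (h * ε ^ 2) * (h * σ ^ 2)
        < d ^ 2 := by
      rw [hq, hd]; nlinarith [hcond]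
    have habs : ∀ N : ℝ, 0 < N → N < d ^ 2 → |d⁻¹ ^ 2 * N| < 1 := by
      intro N h0 h1
      rw [hdiv, abs_lt]
      constructor
      · have : (0:ℝ) < N / d ^ 2 := div_pos h0 hd2
        linarith
      · exact (div_lt_one hd2).2 h1
    rcases (key μ).1 hmu with rfl | rfl | rfl | rfl <;> rw [Complex.norm_real, Real.norm_eq_abs]
    · have : A + B = d⁻¹ ^ 2 * (1 + 2 * (h * ε ^ 2) + 2 * (h * σ ^ 2) + q
          + (h * ε ^ 2) * (h * σ ^ 2)) := by rw [hA, hB]; ring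
      rw [this]
      exact habs _ (by rw [hq]; nlinarith) hN1
    · have : A - B = d⁻¹ ^ 2 * (1 + 2 * (h * ε ^ 2) + q
          - (h * ε ^ 2) * (h * σ ^ 2)) := by rw [hA, hB]; ring
      rw [this]
      refine habs _ (by rw [hq]; nlinarith [sq_nonneg (h * ε ^ 2 - h * σ ^ 2)]) ?_
      nlinarith [hN1]
    · have : C + D = d⁻¹ ^ 2 * (1 + 2 * (h * σ ^ 2) + q
          - (h * ε ^ 2) * (h * σ ^ 2)) := by rw [hC, hD]; ring
      rw [this]
      refine habs _ (by rw [hq]; nlinarith [sq_nonneg (h * ε ^ 2 - h * σ ^ 2)]) ?_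
      nlinarith [hN1]
    · have : C - D = d⁻¹ ^ 2 * (1 + q + (h * ε ^ 2) * (h * σ ^ 2)) := by
        rw [hC, hD]; ring
      rw [this]
      refine habs _ (by rw [hq]; nlinarith) ?_
      nlinarith [hN1]
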